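/- Let Θ ⊂ ℝ^d be a compact measurable set, and let p : ℝ^k × Θ → ℝ, (ψ, θ) ↦ p_ψ(θ), be such that for each θ the map ψ ↦ p_ψ(θ) is differentiable and for each ψ the gradient θ ↦ ∇_ψ p_ψ(θ) is continuous in θ. Let x_obs ∈ ℝ^q, let d* : ℝ^q → [0,1] satisfy d*(x_obs) = 1 and d*(x) = 0 for x ≠ x_obs. Let (U, p_U) be a probability space, g : Θ × U → ℝ^q measurable with g(θ,u) ≠ x_obs for all (θ,u), and b : [0,1] → ℝ strictly decreasing with b(0) = 0 and lim_{t → 0+} b(t) = 0. Fix any ψ. Then for every η > 0 there exists ε₀ > 0 such that for every measurable d_φ : ℝ^q → [0,1] with sup_x |d_φ(x) − d*(x)| < ε₀, the gradient of the value function satisfies ‖∫_Θ ∇_ψ p_ψ(θ) · (∫_U b(d_φ(g(θ,u))) dp_U(u)) dθ‖₂ ≤ η. In other words, the gradient with respect to the proposal parameter ψ converges to zero as the discriminator converges to the optimal discriminator in supremum norm. -/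

import Mathlib

open MeasureTheory

/-- **Corollary 1: gradient vanishing near the optimal discriminator.** In AVO with a compact
input space `Θ ⊂ ℝ^d`, a proposal density family `p ψ θ` differentiable in `ψ` with gradient
continuous in `θ`, a black-box generator `g` never hitting the observation `x_obs`, and a
strictly decreasing transform `b` with `b 0 = 0` and `b (0+) = 0`, the gradient of the value
function with respect to the proposal parameter `ψ` converges to zero as the discriminator
converges to the optimal discriminator `dstar` in supremum norm:
for every `η > 0` there is `ε₀ > 0` such that every measurable discriminator `dφ : ℝ^q → [0,1]`
with `sup_x |dφ x - dstar x| < ε₀` satisfies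
`‖∫_Θ (E_u[b (dφ (g θ u))]) • ∇_ψ p ψ θ dθ‖ ≤ η`. -/
theorem avo_gradient_vanishing
    {d k q : ℕ}
    (Θ : Set (EuclideanSpace ℝ (Fin d)))
    (hΘc : IsCompact Θ) (hΘm : MeasurableSet Θ)
    (p : EuclideanSpace ℝ (Fin k) → EuclideanSpace ℝ (Fin d) → ℝ)
    (hdiff : ∀ θ ∈ Θ, Differentiable ℝ (fun ψ => p ψ θ))
    (hcont : ∀ ψ : EuclideanSpace ℝ (Fin k),
      ContinuousOn (fun θ => gradient (fun ψ' => p ψ' θ) ψ) Θ)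
    (x_obs : EuclideanSpace ℝ (Fin q))
    (dstar : EuclideanSpace ℝ (Fin q) → ℝ)
    (hd1 : dstar x_obs = 1) (hd0 : ∀ x, x ≠ x_obs → dstar x = 0)
    {U : Type*} [MeasurableSpace U] (pU : Measure U) [IsProbabilityMeasure pU]
    (g : EuclideanSpace ℝ (Fin d) → U → EuclideanSpace ℝ (Fin q))
    (hgm : Measurable (fun z : EuclideanSpace ℝ (Fin d) × U => g z.1 z.2))
    (hgne : ∀ θ ∈ Θ, ∀ u, g θ u ≠ x_obs)
    (b : ℝ → ℝ) (hb : StrictAntiOn b (Set.Icc 0 1))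
    (hb0 : b 0 = 0)
    (hblim : Filter.Tendsto b (nhdsWithin 0 (Set.Ioi 0)) (nhds 0))
    (ψ : EuclideanSpace ℝ (Fin k)) :
    ∀ η : ℝ, 0 < η → ∃ ε₀ : ℝ, 0 < ε₀ ∧
      ∀ dφ : EuclideanSpace ℝ (Fin q) → ℝ, Measurable dφ →
        (∀ x, dφ x ∈ Set.Icc (0 : ℝ) 1) →
        (⨆ x, |dφ x - dstar x|) < ε₀ →
        ‖∫ θ in Θ, (∫ u, b (dφ (g θ u)) ∂pU) • gradient (fun ψ' => p ψ' θ) ψ‖ ≤ η := by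
  intro η hη
  obtain ⟨M, hM⟩ := hΘc.exists_bound_of_continuousOn (hcont ψ)
  set M' : ℝ := max M 0 with hM'def
  have hM'0 : 0 ≤ M' := le_max_right _ _
  have hMle : ∀ θ ∈ Θ, ‖gradient (fun ψ' => p ψ' θ) ψ‖ ≤ M' :=
    fun θ hθ => (hM θ hθ).trans (le_max_left _ _)
  have hVfin : volume Θ < ⊤ := hΘc.measure_lt_top
  set V : ℝ := (volume Θ).toReal with hVdef
  have hV0 : 0 ≤ V := ENNReal.toReal_nonneg
  set δ : ℝ := η / (M' * V + 1) with hδdef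
  have hden : 0 < M' * V + 1 := by positivity
  have hδ : 0 < δ := div_pos hη hden
  rw [Metric.tendsto_nhdsWithin_nhds] at hblim
  obtain ⟨ε₀, hε₀, hball⟩ := hblim δ hδ
  refine ⟨ε₀, hε₀, fun dφ hmφ hrange hsup => ?_⟩
  -- bound on b at values of dφ ∘ g
  have hbdd : BddAbove (Set.range fun x => |dφ x - dstar x|) := by
    refine ⟨2, fun y hy => ?_⟩
    obtain ⟨x, rfl⟩ := hy
    have h1 := hrange x
    have h2 : dstar x = 0 ∨ dstar x = 1 := by
      by_cases hx : x = x_obs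
      · exact Or.inr (hx ▸ hd1)
      · exact Or.inl (hd0 x hx)
    show |dφ x - dstar x| ≤ 2
    rcases h2 with h | h <;> rw [h, abs_le] <;> constructor <;> nlinarith [h1.1, h1.2]
  have key : ∀ θ ∈ Θ, ∀ u, |b (dφ (g θ u))| ≤ δ := by
    intro θ hθ u
    set t := dφ (g θ u) with ht
    have ht0 : 0 ≤ t := (hrange _).1
    have htlt : t < ε₀ := by
      have h0 : dstar (g θ u) = 0 := hd0 _ (hgne θ hθ u)
      have : |dφ (g θ u) - dstar (g θ u)| ≤ ⨆ x, |dφ x - dstar x| :=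
        le_ciSup hbdd (g θ u)
      rw [h0, sub_zero] at this
      calc t ≤ |t| := le_abs_self t
        _ < ε₀ := lt_of_le_of_lt this hsup
    rcases eq_or_lt_of_le ht0 with h | h
    · rw [← h, hb0, abs_zero]; exact hδ.le
    · have := hball (Set.mem_Ioi.mpr h) (by simpa [Real.dist_eq, abs_of_pos h] using htlt)
      rw [Real.dist_eq, sub_zero] at this
      exact this.le
  have inner_bd : ∀ θ ∈ Θ, ‖∫ u, b (dφ (g θ u)) ∂pU‖ ≤ δ := by
    intro θ hθ
    have := norm_integral_le_of_norm_le_const (μ := pU)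
      (f := fun u => b (dφ (g θ u)))
      (Filter.Eventually.of_forall (fun u => by
        simpa [Real.norm_eq_abs] using key θ hθ u))
    simpa using this
  have main := norm_setIntegral_le_of_norm_le_const (μ := volume) (C := δ * M')
    hVfin (f := fun θ => (∫ u, b (dφ (g θ u)) ∂pU) • gradient (fun ψ' => p ψ' θ) ψ)
    (fun θ hθ => by
      rw [norm_smul]
      exact mul_le_mul (inner_bd θ hθ) (hMle θ hθ) (norm_nonneg _)
        hδ.le)
  refine main.trans ?_
  have : δ * M' * V ≤ δ * (M' * V + 1) := by nlinarith
  calc δ * M' * V ≤ δ * (M' * V + 1) := this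
    _ = η := by rw [hδdef, div_mul_cancel₀ _ hden.ne']
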